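/- Let p ≥ 2 be an integer and r a real number with 0 < r < 1. For every vector w ∈ ℝ^p with wᵢ ≥ 0 for all i and Σᵢ wᵢ = 1, one has Q(w,r) ≤ (1+(p−2)r)/D(p,r), and equality holds when w is a standard basis vector e_j; that is, among all properly weighted group effects, the individual effects β_j are the hardest to estimate, with variance Q(e_j,r) = (1+(p−2)r)/D(p,r). -/

import Mathlib

open Matrix

/-- The `p × p` Gram/correlation matrix of a uniform model at multicollinearity
level `r`: diagonal entries `1`, off-diagonal entries `r`. -/
noncomputable def unifMat (p : ℕ) (r : ℝ) : Matrix (Fin p) (Fin p) ℝ :=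
  fun i j => if i = j then 1 else r

/-- `Q(w,r) = wᵀ A(p,r)⁻¹ w`. -/
noncomputable def Qform (p : ℕ) (r : ℝ) (w : Fin p → ℝ) : ℝ :=
  w ⬝ᵥ (unifMat p r)⁻¹.mulVec w

lemma unifMat_inv (p : ℕ) (r : ℝ)
    (hD : (1 - r) * (1 + ((p:ℝ) - 1) * r) ≠ 0) :
    (unifMat p r)⁻¹ = fun i j => if i = j then
        (1 + ((p:ℝ) - 2) * r) / ((1 - r) * (1 + ((p:ℝ) - 1) * r))
      else -r / ((1 - r) * (1 + ((p:ℝ) - 1) * r)) := by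
  set D : ℝ := (1 - r) * (1 + ((p:ℝ) - 1) * r) with hDdef
  set a : ℝ := (1 + ((p:ℝ) - 2) * r) / D with ha
  set b : ℝ := -r / D with hb
  apply Matrix.inv_eq_right_inv
  ext i j
  change (∑ k, unifMat p r i k * (if k = j then a else b)) = (1 : Matrix (Fin p) (Fin p) ℝ) i j
  simp only [unifMat, Matrix.one_apply]
  have key : ∀ k : Fin p, (if i = k then (1:ℝ) else r) * (if k = j then a else b)
      = r * ((if k = j then a - b else 0) + b)
        + (if k = i then (1 - r) * (if k = j then a else b) else 0) := by
    intro k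
    by_cases h : i = k
    · subst h; by_cases h2 : i = j <;> simp [h2] <;> ring
    · have h' : ¬ k = i := fun hh => h hh.symm
      by_cases h2 : k = j
      · subst h2
        simp [h, h', Ne.symm h]
      · simp [h, h', h2]
  rw [Finset.sum_congr rfl (fun k _ => key k)]
  rw [Finset.sum_add_distrib, Finset.sum_ite_eq' Finset.univ i]
  simp only [Finset.mem_univ, if_true]
  rw [← Finset.mul_sum, Finset.sum_add_distrib, Finset.sum_ite_eq' Finset.univ j]
  simp only [Finset.mem_univ, if_true, Finset.sum_const, Finset.card_univ, Fintype.card_fin,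
    nsmul_eq_mul]
  by_cases h2 : i = j
  · subst h2
    simp only [if_pos rfl, eq_self_iff_true, if_true, ha, hb]
    field_simp
    ring
  · simp only [if_neg h2, ha, hb]
    field_simp
    ring

lemma qform_eval (p : ℕ) (r : ℝ)
    (hD : (1 - r) * (1 + ((p:ℝ) - 1) * r) ≠ 0) (w : Fin p → ℝ) :
    Qform p r w =
      ((1 + ((p:ℝ) - 2) * r) / ((1 - r) * (1 + ((p:ℝ) - 1) * r))
        - (-r) / ((1 - r) * (1 + ((p:ℝ) - 1) * r))) * (∑ i, (w i)^2)
      + (-r) / ((1 - r) * (1 + ((p:ℝ) - 1) * r)) * (∑ i, w i)^2 := by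
  set a : ℝ := (1 + ((p:ℝ) - 2) * r) / ((1 - r) * (1 + ((p:ℝ) - 1) * r)) with ha
  set b : ℝ := -r / ((1 - r) * (1 + ((p:ℝ) - 1) * r)) with hb
  rw [Qform, unifMat_inv p r hD]
  simp only [dotProduct, mulVec, dotProduct]
  have key : ∀ i : Fin p,
      w i * (∑ j, (if i = j then a else b) * w j)
        = (a - b) * (w i)^2 + b * (w i * ∑ j, w j) := by
    intro i
    have h1 : ∀ j : Fin p, (if i = j then a else b) * w j
        = (if j = i then (a - b) * w j else 0) + b * w j := by
      intro j
      by_cases h : i = j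
      · subst h; simp; ring
      · have h' : ¬ j = i := fun hh => h hh.symm
        simp [h, h']
    rw [Finset.sum_congr rfl (fun j _ => h1 j), Finset.sum_add_distrib,
      Finset.sum_ite_eq' Finset.univ i, ← Finset.mul_sum]
    simp only [Finset.mem_univ, if_true]
    ring
  rw [Finset.sum_congr rfl (fun i _ => key i), Finset.sum_add_distrib,
    ← Finset.mul_sum, ← Finset.mul_sum, ← Finset.sum_mul]
  ring

/-- among nonnegative weight vectors summing to 1, the variance
`Q(w,r)` is at most `(1+(p−2)r)/D(p,r)`, with equality at every standard basis
vector `e_j`; i.e. the individual effects `β_j` are the hardest to estimate. -/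
theorem individual_effects_hardest (p : ℕ) (hp : 2 ≤ p) (r : ℝ)
    (hr0 : 0 < r) (hr1 : r < 1) :
    (∀ w : Fin p → ℝ, (∀ i, 0 ≤ w i) → (∑ i, w i) = 1 →
      Qform p r w ≤
        (1 + ((p : ℝ) - 2) * r) / (1 + ((p : ℝ) - 2) * r - ((p : ℝ) - 1) * r ^ 2)) ∧
    (∀ j : Fin p, Qform p r (fun i => if i = j then 1 else 0) =
      (1 + ((p : ℝ) - 2) * r) / (1 + ((p : ℝ) - 2) * r - ((p : ℝ) - 1) * r ^ 2)) := by
  have hpR : (2:ℝ) ≤ (p:ℝ) := by exact_mod_cast hp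
  have h1 : (0:ℝ) < 1 - r := by linarith
  have h2 : (0:ℝ) < 1 + ((p:ℝ) - 1) * r := by nlinarith
  have hDpos : (0:ℝ) < (1 - r) * (1 + ((p:ℝ) - 1) * r) := mul_pos h1 h2
  have hD : (1 - r) * (1 + ((p:ℝ) - 1) * r) ≠ 0 := ne_of_gt hDpos
  have hDeq : 1 + ((p : ℝ) - 2) * r - ((p : ℝ) - 1) * r ^ 2
      = (1 - r) * (1 + ((p:ℝ) - 1) * r) := by ring
  constructor
  · intro w hw hsum
    rw [qform_eval p r hD w, hsum, hDeq]
    have hsq : ∑ i, (w i)^2 ≤ 1 := by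
      rw [← hsum]
      apply Finset.sum_le_sum
      intro i _
      have hle1 : w i ≤ 1 := hsum ▸ Finset.single_le_sum (fun j _ => hw j) (Finset.mem_univ i)
      nlinarith [hw i]
    have hab : 0 < (1 + ((p:ℝ) - 2) * r) / ((1 - r) * (1 + ((p:ℝ) - 1) * r))
        - (-r) / ((1 - r) * (1 + ((p:ℝ) - 1) * r)) := by
      rw [div_sub_div_same]
      apply div_pos _ hDpos
      nlinarith
    nlinarith [mul_le_mul_of_nonneg_left hsq (le_of_lt hab)]
  · intro j
    rw [qform_eval p r hD, hDeq]
    have e1 : ∑ i : Fin p, (if i = j then (1:ℝ) else 0) = 1 := by simp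
    have e2 : ∑ i : Fin p, ((if i = j then (1:ℝ) else 0))^2 = 1 := by
      have h3 : ∀ i : Fin p, ((if i = j then (1:ℝ) else 0))^2 = if i = j then 1 else 0 := by
        intro i; by_cases h : i = j <;> simp [h]
      simp only [h3]; exact e1
    rw [e1, e2]
    ring
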